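/- Let r ∈ ℂ, λ ∈ ℂ*, and suppose f is a holomorphic function on a neighbourhood of the closed lower half-plane minus {∞} in ℂ, satisfying f(t+1) = λ·f(t), and such that (i - t)^(2-r)·f(t) admits the asymptotic expansion ∑_{n ≥ k} b_n t^(-n) (for some k ∈ ℤ) both as t → +∞ and as t → -∞ along ℝ, with the same coefficients b_n. Then: (a) if λ = 1 and r ∈ ℤ with r ≥ k + 2, then f is a constant function; (b) in all other cases f = 0. -/

import Mathlib

open Complex Filter Topology

private lemma aux_ne (x : ℝ) : Complex.I - (x:ℂ) ≠ 0 := by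
  intro h
  have := congrArg Complex.im h
  simp at this

private lemma geom_tendsto_one {𝕜 : Type*} [NormedField 𝕜] {a ℓ : 𝕜} (hℓ : ℓ ≠ 0)
    (h : Tendsto (fun n : ℕ => a ^ n) atTop (𝓝 ℓ)) : a = 1 := by
  have h1 : Tendsto (fun n : ℕ => a ^ (n + 1)) atTop (𝓝 ℓ) :=
    h.comp (tendsto_add_atTop_nat 1)
  have h2 : Tendsto (fun n : ℕ => a * a ^ n) atTop (𝓝 (a * ℓ)) := h.const_mul a
  have h3 : (fun n : ℕ => a ^ (n + 1)) = fun n : ℕ => a * a ^ n := by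
    funext n; rw [pow_succ, mul_comm]
  rw [h3] at h1
  have h4 : ℓ = a * ℓ := tendsto_nhds_unique h1 h2
  have h5 : (a - 1) * ℓ = 0 := by ring_nf; linear_combination -h4
  rcases mul_eq_zero.mp h5 with h | h
  · have := sub_eq_zero.mp h
    exact this
  · exact absurd h hℓ

private lemma rpow_exponent_zero {e ℓ : ℝ} (hℓ : ℓ ≠ 0)
    (h : Tendsto (fun n : ℕ => (n:ℝ) ^ e) atTop (𝓝 ℓ)) : e = 0 := by
  have h1 : Tendsto (fun n : ℕ => ((2 * n : ℕ):ℝ) ^ e) atTop (𝓝 ℓ) := by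
    refine h.comp ?_
    exact tendsto_atTop_mono (fun n => Nat.le_mul_of_pos_left n (by norm_num)) tendsto_id
  have h2 : (fun n : ℕ => ((2 * n : ℕ):ℝ) ^ e) = fun n : ℕ => (2:ℝ) ^ e * (n:ℝ) ^ e := by
    funext n
    push_cast
    rw [Real.mul_rpow (by norm_num) (Nat.cast_nonneg n)]
  rw [h2] at h1
  have h3 : Tendsto (fun n : ℕ => (2:ℝ) ^ e * (n:ℝ) ^ e) atTop (𝓝 ((2:ℝ) ^ e * ℓ)) :=
    h.const_mul _
  have h4 := tendsto_nhds_unique h1 h3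
  have h5 : (2:ℝ) ^ e = 1 := by
    have : ((2:ℝ) ^ e - 1) * ℓ = 0 := by linarith
    rcases mul_eq_zero.mp this with h | h
    · linarith
    · exact absurd h hℓ
  have h6 : Real.exp (Real.log 2 * e) = 1 := by
    rw [← Real.rpow_def_of_pos (by norm_num : (0:ℝ) < 2)]; exact h5
  have h7 : Real.log 2 * e = 0 := by
    have := congrArg Real.log h6
    rwa [Real.log_exp, Real.log_one] at this
  have : Real.log 2 ≠ 0 := ne_of_gt (Real.log_pos (by norm_num))
  rcases mul_eq_zero.mp h7 with h | h
  · exact absurd h this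
  · exact h

private lemma cpow_norm_eq {z : ℂ} (hz : z ≠ 0) (w : ℂ) :
    ‖z ^ w‖ = ‖z‖ ^ w.re * Real.exp (-(Complex.arg z * w.im)) := by
  rw [Complex.norm_cpow_of_ne_zero hz, Real.exp_neg, div_eq_mul_inv]

private lemma cpow_norm_le {z : ℂ} (hz : z ≠ 0) (w : ℂ) :
    ‖z ^ w‖ ≤ ‖z‖ ^ w.re * Real.exp (Real.pi * |w.im|) := by
  rw [cpow_norm_eq hz w]
  have harg : -(Complex.arg z * w.im) ≤ Real.pi * |w.im| := by
    calc -(Complex.arg z * w.im) ≤ |Complex.arg z * w.im| := neg_le_abs _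
      _ = |Complex.arg z| * |w.im| := abs_mul _ _
      _ ≤ Real.pi * |w.im| := by
          have := Complex.abs_arg_le_pi z
          have := abs_nonneg w.im
          nlinarith
  have := Real.exp_le_exp.mpr harg
  have h0 : (0:ℝ) ≤ ‖z‖ ^ w.re := Real.rpow_nonneg (norm_nonneg z) _
  nlinarith [Real.exp_pos (-(Complex.arg z * w.im))]

private lemma tend_aux {g : ℝ → ℂ} {b0 : ℂ} {n0 : ℤ} {C M : ℝ} (hM : 1 ≤ M)
    (hC : ∀ x : ℝ, M ≤ |x| → ‖g x - b0 * (x:ℂ) ^ (-n0)‖ ≤ C * |x| ^ (-(n0+1)))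
    {y : ℕ → ℝ} (hy : Tendsto (fun n => |y n|) atTop atTop) :
    Tendsto (fun n => ((y n : ℝ):ℂ) ^ n0 * g (y n)) atTop (𝓝 b0) := by
  rw [← tendsto_sub_nhds_zero_iff]
  have hbound : ∀ᶠ n in atTop, ‖((y n : ℝ):ℂ) ^ n0 * g (y n) - b0‖ ≤ C * |y n|⁻¹ := by
    filter_upwards [hy.eventually_ge_atTop M] with n hn
    have h1 : (1:ℝ) ≤ |y n| := le_trans hM hn
    have h0 : (0:ℝ) < |y n| := lt_of_lt_of_le zero_lt_one h1
    have hyne : y n ≠ 0 := fun h => by simp [h] at h0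
    have hcne : ((y n : ℝ):ℂ) ≠ 0 := Complex.ofReal_ne_zero.mpr hyne
    have key : ((y n : ℝ):ℂ) ^ n0 * g (y n) - b0
        = ((y n : ℝ):ℂ) ^ n0 * (g (y n) - b0 * ((y n : ℝ):ℂ) ^ (-n0)) := by
      rw [mul_sub]
      congr 1
      rw [mul_comm b0, ← mul_assoc, ← zpow_add₀ hcne]
      simp
    rw [key, norm_mul]
    have hnorm : ‖((y n : ℝ):ℂ) ^ n0‖ = |y n| ^ n0 := by
      rw [norm_zpow, Complex.norm_real, Real.norm_eq_abs]
    rw [hnorm]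
    calc |y n| ^ n0 * ‖g (y n) - b0 * ((y n : ℝ):ℂ) ^ (-n0)‖
        ≤ |y n| ^ n0 * (C * |y n| ^ (-(n0+1))) := by
          apply mul_le_mul_of_nonneg_left (hC (y n) hn)
          exact le_of_lt (zpow_pos h0 n0)
      _ = C * |y n|⁻¹ := by
          rw [mul_comm C, ← mul_assoc, ← zpow_add₀ (ne_of_gt h0)]
          norm_num
          ring
  have hlim : Tendsto (fun n => C * |y n|⁻¹) atTop (𝓝 0) := by
    have : Tendsto (fun n => |y n|⁻¹) atTop (𝓝 0) := tendsto_inv_atTop_zero.comp hy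
    simpa using this.const_mul C
  exact squeeze_zero_norm' hbound hlim

private lemma per_nat {lam : ℂ} {f : ℂ → ℂ} (hper : ∀ t : ℂ, t.im ≤ 0 → f (t + 1) = lam * f t) :
    ∀ (n : ℕ) (x : ℝ), f ((x:ℂ) + n) = lam ^ n * f x := by
  intro n
  induction n with
  | zero => intro x; simp
  | succ n ih =>
    intro x
    have h1 : ((x:ℂ) + (n+1:ℕ)) = ((x:ℂ) + n) + 1 := by push_cast; ring
    rw [h1, hper _ (by simp), ih, pow_succ]
    ring

private lemma const_of_real {U : Set ℂ} (hU : IsOpen U) (hUsub : {t : ℂ | t.im ≤ 0} ⊆ U)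
    {f : ℂ → ℂ} (hf : DifferentiableOn ℂ f U) {c : ℂ} (hreal : ∀ x : ℝ, f ((x:ℝ):ℂ) = c) :
    ∀ t : ℂ, t.im ≤ 0 → f t = c := by
  have h0S : (0:ℂ) ∈ {t : ℂ | t.im ≤ 0} := by simp
  have h0U : (0:ℂ) ∈ U := hUsub h0S
  set W := connectedComponentIn U 0 with hW
  have hWopen : IsOpen W := hU.connectedComponentIn
  have hWsub : W ⊆ U := connectedComponentIn_subset U 0
  have hSW : {t : ℂ | t.im ≤ 0} ⊆ W := by
    have hconv : Convex ℝ {t : ℂ | t.im ≤ 0} := convex_halfSpace_im_le 0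
    exact hconv.isPreconnected.subset_connectedComponentIn h0S hUsub
  have hfa : AnalyticOnNhd ℂ f W := (hf.mono hWsub).analyticOnNhd hWopen
  have hga : AnalyticOnNhd ℂ (fun _ => c) W := analyticOnNhd_const
  have h0W : (0:ℂ) ∈ W := mem_connectedComponentIn h0U
  have hfreq : ∃ᶠ z in 𝓝[≠] (0:ℂ), f z = c := by
    have hs0 : Tendsto (fun j : ℕ => (-(1 / ((j:ℝ)+1)) : ℝ)) atTop (𝓝 0) := by
      simpa using (tendsto_one_div_add_atTop_nhds_zero_nat (𝕜 := ℝ)).neg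
    have hsC : Tendsto (fun j : ℕ => ((-(1 / ((j:ℝ)+1)) : ℝ) : ℂ)) atTop (𝓝 0) := by
      have h2 := (Complex.continuous_ofReal.tendsto (0:ℝ)).comp hs0
      simp only [Complex.ofReal_zero] at h2
      exact h2
    have hsmem : ∀ j : ℕ, ((-(1 / ((j:ℝ)+1)) : ℝ) : ℂ) ∈ ({(0:ℂ)}ᶜ : Set ℂ) := by
      intro j
      simp only [Set.mem_compl_iff, Set.mem_singleton_iff, Complex.ofReal_eq_zero]
      intro h
      have : (0:ℝ) < 1 / ((j:ℝ)+1) := by positivity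
      simp at h
      linarith [h]
    have hs : Tendsto (fun j : ℕ => ((-(1 / ((j:ℝ)+1)) : ℝ) : ℂ)) atTop (𝓝[≠] (0:ℂ)) :=
      tendsto_nhdsWithin_of_tendsto_nhds_of_eventually_within _ hsC
        (Eventually.of_forall hsmem)
    exact hs.frequently (Frequently.of_forall fun j => hreal _)
  intro t ht
  exact hfa.eqOn_of_preconnected_of_frequently_eq hga isPreconnected_connectedComponentIn
    h0W hfreq (hSW ht)

/-- A `λ`-periodic holomorphic function on a neighbourhood of the closed
lower half-plane whose projective version `(i-t)^(2-r) f t` has the same asymptotic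
expansion `∑_{n ≥ k} b n t^(-n)` as `t → +∞` and `t → -∞` along `ℝ` is constant if
`λ = 1` and `r ∈ ℤ`, `r ≥ k+2`, and is zero in all other cases. -/
theorem lambda_periodic_two_sided_asymptotics
    (r lam : ℂ) (hlam : lam ≠ 0) (k : ℤ) (b : ℤ → ℂ)
    (U : Set ℂ) (hU : IsOpen U) (hUsub : {t : ℂ | t.im ≤ 0} ⊆ U)
    (f : ℂ → ℂ) (hf : DifferentiableOn ℂ f U)
    (hper : ∀ t : ℂ, t.im ≤ 0 → f (t + 1) = lam * f t)
    (hasymp : ∀ N : ℤ, k ≤ N → ∃ C M : ℝ, 1 ≤ M ∧ ∀ x : ℝ, M ≤ |x| →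
        ‖(Complex.I - (x : ℂ)) ^ ((2 : ℂ) - r) * f (x : ℂ) -
            ∑ n ∈ Finset.Icc k (N - 1), b n * (x : ℂ) ^ (-n)‖ ≤ C * |x| ^ (-N)) :
    ((lam = 1 ∧ ∃ m : ℤ, k + 2 ≤ m ∧ r = (m : ℂ)) →
        ∃ c : ℂ, ∀ t : ℂ, t.im ≤ 0 → f t = c) ∧
    (¬ (lam = 1 ∧ ∃ m : ℤ, k + 2 ≤ m ∧ r = (m : ℂ)) →
        ∀ t : ℂ, t.im ≤ 0 → f t = 0) := by
  classical
  have hIne : ∀ x : ℝ, Complex.I - (x:ℂ) ≠ 0 := aux_ne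
  have hpn : ∀ (n : ℕ) (x : ℝ), f ((x:ℂ) + n) = lam ^ n * f x := per_nat hper
  set g : ℝ → ℂ := fun x => (Complex.I - (x : ℂ)) ^ ((2 : ℂ) - r) * f (x : ℂ) with hgdef
  have hfg : ∀ x : ℝ, f (x:ℂ) = (Complex.I - (x:ℂ)) ^ (r - 2) * g x := by
    intro x
    have h1 : (Complex.I - (x:ℂ)) ^ (r - 2) * (Complex.I - (x:ℂ)) ^ ((2:ℂ) - r) = 1 := by
      rw [← Complex.cpow_add _ _ (hIne x)]
      have h2 : r - 2 + ((2:ℂ) - r) = 0 := by ring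
      rw [h2, Complex.cpow_zero]
    calc f (x:ℂ) = ((Complex.I - (x:ℂ)) ^ (r - 2) * (Complex.I - (x:ℂ)) ^ ((2:ℂ) - r))
          * f (x:ℂ) := by rw [h1, one_mul]
      _ = (Complex.I - (x:ℂ)) ^ (r - 2) * g x := by rw [hgdef]; ring
  by_cases hb : ∀ n : ℤ, k ≤ n → b n = 0
  · -- CASE A : all coefficients vanish, f ≡ 0
    obtain ⟨N, hNk, hNρ⟩ : ∃ N : ℤ, k ≤ N ∧ r.re - 2 - N ≤ -1 := by
      refine ⟨max k ⌈r.re⌉, le_max_left _ _, ?_⟩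
      have h1 : r.re ≤ (⌈r.re⌉ : ℝ) := Int.le_ceil _
      have h2 : ((⌈r.re⌉ : ℤ) : ℝ) ≤ ((max k ⌈r.re⌉ : ℤ) : ℝ) :=
        Int.cast_le.mpr (le_max_right _ _)
      linarith
    obtain ⟨C, M, hM1, hCM⟩ := hasymp N hNk
    have hgN : ∀ x : ℝ, M ≤ |x| → ‖g x‖ ≤ |C| * |x| ^ (-N) := by
      intro x hx
      have h0 := hCM x hx
      have hsum : (∑ n ∈ Finset.Icc k (N-1), b n * (x:ℂ) ^ (-n)) = 0 :=
        Finset.sum_eq_zero fun n hn => by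
          rw [hb n (Finset.mem_Icc.mp hn).1, zero_mul]
      rw [hsum, sub_zero] at h0
      refine le_trans h0 (mul_le_mul_of_nonneg_right (le_abs_self C) ?_)
      have : (0:ℝ) < |x| := lt_of_lt_of_le (lt_of_lt_of_le zero_lt_one hM1) hx
      exact (zpow_pos this _).le
    set s : ℝ := r.re - 2 with hs
    set E : ℝ := 2 ^ |s| * Real.exp (Real.pi * |(r - 2).im|) * |C| with hE
    have hfb : ∀ x : ℝ, max M 1 ≤ |x| → ‖f (x:ℂ)‖ ≤ E * |x|⁻¹ := by
      intro x hx
      have hMx : M ≤ |x| := le_trans (le_max_left _ _) hx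
      have h1x : (1:ℝ) ≤ |x| := le_trans (le_max_right _ _) hx
      have h0x : (0:ℝ) < |x| := lt_of_lt_of_le zero_lt_one h1x
      have hre : (r - 2).re = s := by simp [hs]
      have hA : ‖(Complex.I - (x:ℂ)) ^ (r - 2)‖
          ≤ ‖Complex.I - (x:ℂ)‖ ^ s * Real.exp (Real.pi * |(r-2).im|) := by
        have := cpow_norm_le (hIne x) (r - 2)
        rwa [hre] at this
      have hB : ‖Complex.I - (x:ℂ)‖ ^ s ≤ 2 ^ |s| * |x| ^ s := by
        rcases le_or_gt 0 s with hsp | hsn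
        · have habs : ‖Complex.I - (x:ℂ)‖ ≤ 2 * |x| := by
            calc ‖Complex.I - (x:ℂ)‖
                ≤ ‖Complex.I‖ + ‖(x:ℂ)‖ := by
                  simpa [sub_eq_add_neg] using norm_add_le Complex.I (-(x:ℂ))
              _ = 1 + |x| := by simp [Complex.norm_real]
              _ ≤ 2 * |x| := by linarith
          calc ‖Complex.I - (x:ℂ)‖ ^ s ≤ (2 * |x|) ^ s :=
                Real.rpow_le_rpow (norm_nonneg _) habs hsp
            _ = 2 ^ s * |x| ^ s := Real.mul_rpow (by norm_num) (abs_nonneg x)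
            _ ≤ 2 ^ |s| * |x| ^ s := by
                apply mul_le_mul_of_nonneg_right _ (Real.rpow_nonneg (abs_nonneg x) s)
                exact Real.rpow_le_rpow_of_exponent_le one_le_two (le_abs_self s)
        · have habs : |x| ≤ ‖Complex.I - (x:ℂ)‖ := by
            have h2 := Complex.abs_re_le_norm (Complex.I - (x:ℂ))
            have h3 : (Complex.I - (x:ℂ)).re = -x := by simp
            rw [h3] at h2
            simpa using h2
          calc ‖Complex.I - (x:ℂ)‖ ^ s ≤ |x| ^ s :=
                Real.rpow_le_rpow_of_nonpos h0x habs hsn.le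
            _ ≤ 2 ^ |s| * |x| ^ s := by
                apply le_mul_of_one_le_left (Real.rpow_nonneg (abs_nonneg x) s)
                have := Real.rpow_le_rpow_of_exponent_le one_le_two (abs_nonneg s)
                simpa using this
      have hgx := hgN x hMx
      have hxpow : |x| ^ s * |x| ^ (-N:ℤ) ≤ |x|⁻¹ := by
        have h4 : (|x| ^ (-N:ℤ) : ℝ) = |x| ^ ((-N : ℤ) : ℝ) := (Real.rpow_intCast |x| (-N)).symm
        rw [h4, ← Real.rpow_add h0x]
        have h5 : s + ((-N : ℤ) : ℝ) ≤ -1 := by push_cast; push_cast at hNρ; linarith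
        calc |x| ^ (s + ((-N:ℤ):ℝ)) ≤ |x| ^ (-1 : ℝ) :=
              Real.rpow_le_rpow_of_exponent_le h1x h5
          _ = |x|⁻¹ := by rw [Real.rpow_neg_one]
      calc ‖f (x:ℂ)‖ = ‖(Complex.I - (x:ℂ)) ^ (r - 2)‖ * ‖g x‖ := by
            rw [hfg x, norm_mul]
        _ ≤ (‖Complex.I - (x:ℂ)‖ ^ s * Real.exp (Real.pi * |(r-2).im|))
              * (|C| * |x| ^ (-N)) := by
            apply mul_le_mul hA hgx (norm_nonneg _)
            positivity
        _ ≤ ((2 ^ |s| * |x| ^ s) * Real.exp (Real.pi * |(r-2).im|)) * (|C| * |x| ^ (-N)) := by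
            apply mul_le_mul_of_nonneg_right _ (by positivity)
            exact mul_le_mul_of_nonneg_right hB (Real.exp_nonneg _)
        _ = E * (|x| ^ s * |x| ^ (-N:ℤ)) := by rw [hE]; ring
        _ ≤ E * |x|⁻¹ := by
            apply mul_le_mul_of_nonneg_left hxpow
            rw [hE]; positivity
    have hdecay : ∀ y : ℕ → ℝ, Tendsto (fun n => |y n|) atTop atTop →
        Tendsto (fun n => ‖f ((y n : ℝ):ℂ)‖) atTop (𝓝 0) := by
      intro y hy
      apply squeeze_zero' (Eventually.of_forall fun n => norm_nonneg _)
        (g := fun n => E * |y n|⁻¹)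
      · filter_upwards [hy.eventually_ge_atTop (max M 1)] with n hn
        exact hfb _ hn
      · simpa using (tendsto_inv_atTop_zero.comp hy).const_mul E
    have hzero : ∀ x : ℝ, f ((x:ℝ):ℂ) = 0 := by
      intro x
      have hyp : Tendsto (fun n : ℕ => |x + (n:ℝ)|) atTop atTop := by
        apply tendsto_abs_atTop_atTop.comp
        exact tendsto_atTop_add_const_left _ x tendsto_natCast_atTop_atTop
      have hym : Tendsto (fun n : ℕ => |x - (n:ℝ)|) atTop atTop := by
        apply tendsto_abs_atBot_atTop.comp
        apply tendsto_atBot_add_const_left _ x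
        exact tendsto_neg_atTop_atBot.comp (tendsto_natCast_atTop_atTop (R := ℝ))
      have hplus := hdecay (fun n => x + n) hyp
      have hminus := hdecay (fun n => x - n) hym
      rcases le_total 1 ‖lam‖ with hl | hl
      · have hle : ∀ n : ℕ, ‖f ((x:ℝ):ℂ)‖ ≤ ‖f (((x + n : ℝ)):ℂ)‖ := by
          intro n
          have h1 : ((x + n : ℝ):ℂ) = (x:ℂ) + n := by push_cast; ring
          rw [h1, hpn n x, norm_mul, norm_pow]
          exact le_mul_of_one_le_left (norm_nonneg _) (one_le_pow₀ hl)
        have h2 := ge_of_tendsto hplus (Eventually.of_forall hle)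
        exact norm_le_zero_iff.mp h2
      · have hle : ∀ n : ℕ, ‖f ((x:ℝ):ℂ)‖ ≤ ‖f (((x - n : ℝ)):ℂ)‖ := by
          intro n
          have h1 : ((x:ℝ):ℂ) = ((x - n : ℝ):ℂ) + n := by push_cast; ring
          rw [h1, hpn n (x - n), norm_mul, norm_pow]
          exact mul_le_of_le_one_left (norm_nonneg _) (pow_le_one₀ (norm_nonneg _) hl)
        have h2 := ge_of_tendsto hminus (Eventually.of_forall hle)
        exact norm_le_zero_iff.mp h2
    have hconst := const_of_real hU hUsub hf (c := 0) hzero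
    exact ⟨fun _ => ⟨0, hconst⟩, fun _ => hconst⟩
  · -- CASE B
    push_neg at hb
    obtain ⟨n1, hn1⟩ := hb
    obtain ⟨n0, ⟨hn0k, hb0⟩, hleast⟩ :=
      Int.exists_least_of_bdd (P := fun n => k ≤ n ∧ b n ≠ 0)
        ⟨k, fun z hz => hz.1⟩ ⟨n1, hn1⟩
    have hbz : ∀ n : ℤ, k ≤ n → n < n0 → b n = 0 := by
      intro n hkn hlt
      by_contra hne
      exact absurd (hleast n ⟨hkn, hne⟩) (not_le.mpr hlt)
    obtain ⟨C, M, hM1, hCM⟩ := hasymp (n0 + 1) (by omega)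
    have hC' : ∀ x : ℝ, M ≤ |x| → ‖g x - b n0 * (x:ℂ) ^ (-n0)‖ ≤ C * |x| ^ (-(n0+1)) := by
      intro x hx
      have h0 := hCM x hx
      have hsum : (∑ n ∈ Finset.Icc k (n0+1-1), b n * (x:ℂ) ^ (-n)) = b n0 * (x:ℂ)^(-n0) := by
        apply Finset.sum_eq_single_of_mem n0 (by simp [Finset.mem_Icc]; omega)
        intro m hm hne
        have hm2 := Finset.mem_Icc.mp hm
        rw [hbz m hm2.1 (by omega), zero_mul]
      rw [hsum] at h0
      exact h0
    -- abs-divergence of the two integer sequences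
    have hyP : Tendsto (fun n : ℕ => |(n:ℝ)|) atTop atTop :=
      tendsto_abs_atTop_atTop.comp tendsto_natCast_atTop_atTop
    have hyQ : Tendsto (fun n : ℕ => |(-(n:ℝ))|) atTop atTop := by
      simpa [abs_neg] using hyP
    have hP : Tendsto (fun n : ℕ => (((n:ℝ)):ℂ) ^ n0 * g ((n:ℝ))) atTop (𝓝 (b n0)) :=
      tend_aux hM1 hC' (y := fun n => (n:ℝ)) hyP
    have hQ := tend_aux hM1 hC' (y := fun n => -(n:ℝ)) hyQ
    set B : ℝ := ‖b n0‖ with hBdef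
    have hB : 0 < B := norm_pos_iff.mpr hb0
    have hPn : Tendsto (fun n : ℕ => ‖(((n:ℝ)):ℂ) ^ n0 * g ((n:ℝ))‖) atTop (𝓝 B) := hP.norm
    have hQn := hQ.norm
    set L : ℝ := ‖lam‖ with hLdef
    have hL : 0 < L := norm_pos_iff.mpr hlam
    set F : ℝ := ‖f (((0:ℝ)):ℂ)‖ with hFdef
    -- f never vanishes at 0
    have hf0 : f (((0:ℝ)):ℂ) ≠ 0 := by
      intro h0
      have hzero : ∀ n : ℕ, (((n:ℝ)):ℂ) ^ n0 * g ((n:ℝ)) = 0 := by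
        intro n
        have h3 : ((0:ℝ):ℂ) + (n:ℕ) = (((n:ℝ)):ℂ) := by push_cast; ring
        have hfn : f (((n:ℝ)):ℂ) = 0 := by rw [← h3, hpn n 0, h0, mul_zero]
        simp only [hgdef]
        rw [hfn, mul_zero, mul_zero]
      have h2 : Tendsto (fun _ : ℕ => (0:ℂ)) atTop (𝓝 (b n0)) := by
        rw [show (fun _ : ℕ => (0:ℂ)) = fun n : ℕ => (((n:ℝ)):ℂ) ^ n0 * g ((n:ℝ)) from
          funext fun n => (hzero n).symm]
        exact hP
      exact hb0 (tendsto_nhds_unique h2 tendsto_const_nhds)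
    have hF : 0 < F := norm_pos_iff.mpr hf0
    -- norms of f along the two sequences
    have hfplus : ∀ n : ℕ, ‖f (((n:ℝ)):ℂ)‖ = L ^ n * F := by
      intro n
      have h2 := hpn n 0
      have h3 : ((0:ℝ):ℂ) + (n:ℕ) = (((n:ℝ)):ℂ) := by push_cast; ring
      rw [h3] at h2
      rw [h2, norm_mul, norm_pow]
    have hfminus : ∀ n : ℕ, L ^ n * ‖f (Complex.ofReal (-(n:ℝ)))‖ = F := by
      intro n
      have h2 := hpn n (-(n:ℝ))
      have h3 : (Complex.ofReal (-(n:ℝ))) + (n:ℕ) = ((0:ℝ):ℂ) := by push_cast; ring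
      rw [h3] at h2
      rw [hFdef, h2, norm_mul, norm_pow]
    have hfm_pos : ∀ n : ℕ, 0 < ‖f (Complex.ofReal (-(n:ℝ)))‖ := by
      intro n
      rcases (norm_nonneg (f (Complex.ofReal (-(n:ℝ))))).lt_or_eq with h | h
      · exact h
      · exfalso
        have h1 := hfminus n
        rw [← h, mul_zero] at h1
        exact (ne_of_gt hF) h1.symm
    -- geometric quantities
    set Rn : ℕ → ℝ := fun n => ‖Complex.I - (((n:ℝ)):ℂ)‖ with hRndef
    have hRn_eq : ∀ n : ℕ, Rn n = Real.sqrt ((n:ℝ)^2 + 1) := by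
      intro n
      simp only [hRndef]
      rw [Complex.norm_def, Complex.normSq_apply]
      norm_num
      ring_nf
    have hRn_eq' : ∀ n : ℕ, ‖Complex.I - Complex.ofReal (-(n:ℝ))‖ = Rn n := by
      intro n
      rw [hRn_eq n, Complex.norm_def, Complex.normSq_apply]
      norm_num
      ring_nf
    have hRn_pos : ∀ n : ℕ, 0 < Rn n := by
      intro n
      rw [hRn_eq n]
      apply Real.sqrt_pos.mpr
      positivity
    have hRn_ge : ∀ n : ℕ, (n:ℝ) ≤ Rn n := by
      intro n
      rw [hRn_eq n]
      have h1 : (n:ℝ) = Real.sqrt ((n:ℝ)^2) := (Real.sqrt_sq (Nat.cast_nonneg n)).symm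
      rw [h1]
      apply Real.sqrt_le_sqrt
      nlinarith [Real.sq_sqrt (by positivity : (0:ℝ) ≤ (n:ℝ)^2)]
    have hRtend : Tendsto Rn atTop atTop :=
      tendsto_atTop_mono hRn_ge tendsto_natCast_atTop_atTop
    have hRinv : Tendsto (fun n => (Rn n)⁻¹) atTop (𝓝 0) := tendsto_inv_atTop_zero.comp hRtend
    have hRdiv : Tendsto (fun n : ℕ => Rn n / (n:ℝ)) atTop (𝓝 1) := by
      have hlim : Tendsto (fun n : ℕ => Real.sqrt (1 + ((n:ℝ)^2)⁻¹)) atTop (𝓝 1) := by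
        have h1 : Tendsto (fun n : ℕ => 1 + ((n:ℝ)^2)⁻¹) atTop (𝓝 1) := by
          have h2 : Tendsto (fun n : ℕ => ((n:ℝ)^2)⁻¹) atTop (𝓝 0) := by
            apply tendsto_inv_atTop_zero.comp
            exact (tendsto_pow_atTop two_ne_zero).comp tendsto_natCast_atTop_atTop
          simpa using (tendsto_const_nhds (x := (1:ℝ)) (f := atTop)).add h2
        have h3 := (Real.continuous_sqrt.tendsto 1).comp h1
        simpa [Function.comp_def] using h3
      apply hlim.congr'
      filter_upwards [eventually_ge_atTop 1] with n hn
      have hn0 : (0:ℝ) < (n:ℝ) := by exact_mod_cast hn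
      rw [hRn_eq n]
      rw [show (1 + ((n:ℝ)^2)⁻¹) = ((n:ℝ)^2 + 1) / (n:ℝ)^2 by field_simp]
      rw [Real.sqrt_div (by positivity) _, Real.sqrt_sq hn0.le]
    -- argument limits
    set argp : ℕ → ℝ := fun n => Complex.arg (Complex.I - (((n:ℝ)):ℂ)) with hargpdef
    set argm : ℕ → ℝ := fun n => Complex.arg (Complex.I - Complex.ofReal (-(n:ℝ))) with hargmdef
    have hargp : Tendsto argp atTop (𝓝 Real.pi) := by
      have hlim : Tendsto (fun n : ℕ => Real.arcsin (-(Rn n)⁻¹) + Real.pi) atTop (𝓝 Real.pi) := by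
        have h1 : Tendsto (fun n : ℕ => -(Rn n)⁻¹) atTop (𝓝 0) := by simpa using hRinv.neg
        have h2 := (Real.continuous_arcsin.tendsto 0).comp h1
        simp only [Real.arcsin_zero] at h2
        simpa using h2.add_const Real.pi
      apply hlim.congr'
      filter_upwards [eventually_ge_atTop 1] with n hn
      have hn0 : (0:ℝ) < (n:ℝ) := by exact_mod_cast hn
      have hre : (Complex.I - (((n:ℝ)):ℂ)).re < 0 := by simpa using hn0
      have him : (0:ℝ) ≤ (Complex.I - (((n:ℝ)):ℂ)).im := by simp
      rw [hargpdef]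
      simp only []
      rw [Complex.arg_of_re_neg_of_im_nonneg hre him]
      congr 1
      have h3 : (-(Complex.I - (((n:ℝ)):ℂ))).im = -1 := by simp
      rw [h3]
      rw [show ‖Complex.I - (((n:ℝ)):ℂ)‖ = Rn n from rfl]
      rw [neg_div, ← one_div]
    have hargm : Tendsto argm atTop (𝓝 0) := by
      have hlim : Tendsto (fun n : ℕ => Real.arcsin ((Rn n)⁻¹)) atTop (𝓝 0) := by
        have h2 := (Real.continuous_arcsin.tendsto 0).comp hRinv
        simpa [Real.arcsin_zero, Function.comp_def] using h2
      apply hlim.congr'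
      filter_upwards [] with n
      have hre : (0:ℝ) ≤ (Complex.I - Complex.ofReal (-(n:ℝ))).re := by
        simp [Nat.cast_nonneg]
      rw [hargmdef]
      simp only []
      rw [Complex.arg_of_re_nonneg hre]
      have h3 : (Complex.I - Complex.ofReal (-(n:ℝ))).im = 1 := by simp
      rw [h3, hRn_eq' n, ← one_div]
    -- norm formulas for the cpow factors
    have him2 : ((2:ℂ) - r).im = -r.im := by simp
    have hAp : ∀ n : ℕ, ‖(Complex.I - (((n:ℝ)):ℂ)) ^ ((2:ℂ) - r)‖
        = Rn n ^ ((2:ℂ) - r).re * Real.exp (-(argp n * ((2:ℂ) - r).im)) := by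
      intro n
      exact cpow_norm_eq (hIne ((n:ℝ))) _
    have hAm : ∀ n : ℕ, ‖(Complex.I - Complex.ofReal (-(n:ℝ))) ^ ((2:ℂ) - r)‖
        = Rn n ^ ((2:ℂ) - r).re * Real.exp (-(argm n * ((2:ℂ) - r).im)) := by
      intro n
      have h1 := cpow_norm_eq (hIne (-(n:ℝ))) ((2:ℂ) - r)
      rwa [hRn_eq' n] at h1
    set ρ2 : ℝ := ((2:ℂ) - r).re with hρ2def
    -- explicit formulas for the two norm sequences
    have hPform : ∀ n : ℕ, ‖(((n:ℝ)):ℂ) ^ n0 * g ((n:ℝ))‖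
        = (n:ℝ) ^ n0 * (Rn n ^ ρ2 * Real.exp (-(argp n * ((2:ℂ) - r).im)) * (L ^ n * F)) := by
      intro n
      rw [norm_mul]
      have h1 : ‖(((n:ℝ)):ℂ) ^ n0‖ = (n:ℝ) ^ n0 := by
        rw [norm_zpow, Complex.norm_real, Real.norm_eq_abs, Nat.abs_cast]
      have h2 : ‖g ((n:ℝ))‖ = Rn n ^ ρ2 * Real.exp (-(argp n * ((2:ℂ) - r).im)) * (L ^ n * F) := by
        simp only [hgdef]
        rw [norm_mul, hAp n, hfplus n]
      rw [h1, h2]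
    have hQform : ∀ n : ℕ, ‖(Complex.ofReal (-(n:ℝ))) ^ n0 * g (-(n:ℝ))‖
        = (n:ℝ) ^ n0 * (Rn n ^ ρ2 * Real.exp (-(argm n * ((2:ℂ) - r).im))
            * ‖f (Complex.ofReal (-(n:ℝ)))‖) := by
      intro n
      rw [norm_mul]
      have h1 : ‖(Complex.ofReal (-(n:ℝ))) ^ n0‖ = (n:ℝ) ^ n0 := by
        rw [norm_zpow, Complex.norm_real, Real.norm_eq_abs, abs_neg, Nat.abs_cast]
      have h2 : ‖g (-(n:ℝ))‖ = Rn n ^ ρ2 * Real.exp (-(argm n * ((2:ℂ) - r).im))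
          * ‖f (Complex.ofReal (-(n:ℝ)))‖ := by
        simp only [hgdef]
        rw [norm_mul, hAm n]
      rw [h1, h2]
    -- the ratio identity
    have hkey : ∀ n : ℕ, 1 ≤ n →
        ‖(((n:ℝ)):ℂ) ^ n0 * g ((n:ℝ))‖ / ‖(Complex.ofReal (-(n:ℝ))) ^ n0 * g (-(n:ℝ))‖
        = Real.exp ((argp n - argm n) * r.im) * ((L ^ 2) ^ n) := by
      intro n hn
      have hn0 : (0:ℝ) < (n:ℝ) := by exact_mod_cast hn
      have hnz : ((n:ℝ):ℝ) ^ n0 ≠ 0 := ne_of_gt (zpow_pos hn0 n0)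
      have hRz : Rn n ^ ρ2 ≠ 0 := ne_of_gt (Real.rpow_pos_of_pos (hRn_pos n) _)
      have hFm := hfm_pos n
      have hLn : (0:ℝ) < L ^ n := pow_pos hL n
      have hFmval : ‖f (Complex.ofReal (-(n:ℝ)))‖ = F / L ^ n := by
        rw [eq_div_iff (ne_of_gt hLn), mul_comm]
        exact hfminus n
      rw [hPform n, hQform n, hFmval, him2]
      rw [show (argp n - argm n) * r.im = argp n * r.im - argm n * r.im by ring, Real.exp_sub]
      have he1 : -(argp n * -r.im) = argp n * r.im := by ring
      have he2 : -(argm n * -r.im) = argm n * r.im := by ring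
      rw [he1, he2]
      have hE2 : Real.exp (argm n * r.im) ≠ 0 := Real.exp_ne_zero _
      field_simp
      ring
    -- limit of the ratio gives |lam| = 1 and r.im = 0
    have hS : Tendsto (fun n : ℕ =>
        ‖(((n:ℝ)):ℂ) ^ n0 * g ((n:ℝ))‖ / ‖(Complex.ofReal (-(n:ℝ))) ^ n0 * g (-(n:ℝ))‖)
        atTop (𝓝 1) := by
      have h1 := hPn.div hQn hB.ne'
      rw [div_self hB.ne'] at h1
      exact h1.congr fun n => rfl
    have hE2lim : Tendsto (fun n : ℕ => Real.exp ((argp n - argm n) * r.im)) atTop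
        (𝓝 (Real.exp (Real.pi * r.im))) := by
      have h1 := (hargp.sub hargm).mul_const r.im
      simp only [sub_zero] at h1
      exact (Real.continuous_exp.tendsto _).comp h1
    have hL2 : Tendsto (fun n : ℕ => ((L ^ 2 : ℝ)) ^ n) atTop
        (𝓝 (1 / Real.exp (Real.pi * r.im))) := by
      have h1 := hS.div hE2lim (Real.exp_ne_zero _)
      apply h1.congr'
      filter_upwards [eventually_ge_atTop 1] with n hn
      simp only [Pi.div_apply]
      rw [hkey n hn, mul_comm, mul_div_assoc, div_self (Real.exp_ne_zero _), mul_one]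
    have hL2one : (L ^ 2 : ℝ) = 1 :=
      geom_tendsto_one (one_div_ne_zero (Real.exp_ne_zero _)) hL2
    have hL1 : L = 1 := by
      have hLL : L * L = 1 := by nlinarith [hL2one]
      rcases mul_self_eq_one_iff.mp hLL with h | h
      · exact h
      · exfalso; rw [h] at hL; linarith
    have hexp_pi : Real.exp (Real.pi * r.im) = 1 := by
      have h2 : Tendsto (fun n : ℕ => ((L ^ 2 : ℝ)) ^ n) atTop (𝓝 1) := by
        rw [hL2one]
        simpa using tendsto_const_nhds (x := (1:ℝ)) (f := (atTop : Filter ℕ))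
      have h3 := tendsto_nhds_unique hL2 h2
      field_simp at h3
      linarith
    have hmu : r.im = 0 := by
      have h1 := congrArg Real.log hexp_pi
      rw [Real.log_exp, Real.log_one] at h1
      rcases mul_eq_zero.mp h1 with h | h
      · exact absurd h Real.pi_ne_zero
      · exact h
    -- with r.im = 0 the exponential factors disappear
    have hexp0 : ∀ y : ℝ, Real.exp (-(y * ((2:ℂ) - r).im)) = 1 := by
      intro y
      rw [him2, hmu]
      norm_num
    -- the product identity
    set e : ℝ := 2 * ρ2 + ((2 * n0 : ℤ) : ℝ) with hedef
    have hprod : ∀ n : ℕ, 1 ≤ n →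
        ‖(((n:ℝ)):ℂ) ^ n0 * g ((n:ℝ))‖ * ‖(Complex.ofReal (-(n:ℝ))) ^ n0 * g (-(n:ℝ))‖
        = (F * F) * ((Rn n / (n:ℝ)) ^ (2 * ρ2) * (n:ℝ) ^ e) := by
      intro n hn
      have hn0 : (0:ℝ) < (n:ℝ) := by exact_mod_cast hn
      have hFmval : ‖f (Complex.ofReal (-(n:ℝ)))‖ = F := by
        have h1 := hfminus n
        rw [hL1, one_pow, one_mul] at h1
        exact h1
      rw [hPform n, hQform n, hexp0, hexp0, hFmval, hL1]
      simp only [one_pow, one_mul, mul_one]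
      have hr1 : (Rn n / (n:ℝ)) ^ (2 * ρ2) = Rn n ^ (2 * ρ2) / (n:ℝ) ^ (2 * ρ2) :=
        Real.div_rpow (hRn_pos n).le hn0.le _
      have hr2 : (n:ℝ) ^ e = (n:ℝ) ^ (2 * ρ2) * (n:ℝ) ^ (((2 * n0 : ℤ)):ℝ) := by
        rw [hedef, Real.rpow_add hn0]
      have hr3 : (n:ℝ) ^ (((2 * n0 : ℤ)):ℝ) = ((n:ℝ) ^ n0) * ((n:ℝ) ^ n0) := by
        rw [Real.rpow_intCast, two_mul, zpow_add₀ (ne_of_gt hn0)]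
      have hr4 : Rn n ^ (2 * ρ2) = Rn n ^ ρ2 * Rn n ^ ρ2 := by
        rw [two_mul, Real.rpow_add (hRn_pos n)]
      have hnz : (n:ℝ) ^ (2 * ρ2) ≠ 0 := ne_of_gt (Real.rpow_pos_of_pos hn0 _)
      rw [hr1, hr2, hr3, hr4]
      field_simp
    have hW : Tendsto (fun n : ℕ =>
        ‖(((n:ℝ)):ℂ) ^ n0 * g ((n:ℝ))‖ * ‖(Complex.ofReal (-(n:ℝ))) ^ n0 * g (-(n:ℝ))‖)
        atTop (𝓝 (B * B)) := hPn.mul hQn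
    have hDlim : Tendsto (fun n : ℕ => (F * F) * ((Rn n / (n:ℝ)) ^ (2 * ρ2))) atTop
        (𝓝 (F * F)) := by
      have h1 : Tendsto (fun n : ℕ => (Rn n / (n:ℝ)) ^ (2 * ρ2)) atTop (𝓝 1) := by
        have h2 := ((Real.continuousAt_rpow_const 1 (2 * ρ2) (Or.inl one_ne_zero)).tendsto).comp hRdiv
        simpa [Real.one_rpow, Function.comp_def] using h2
      simpa using h1.const_mul (F * F)
    have hZ : Tendsto (fun n : ℕ => (n:ℝ) ^ e) atTop (𝓝 ((B * B) / (F * F))) := by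
      have h1 := hW.div hDlim (by positivity)
      apply h1.congr'
      filter_upwards [eventually_ge_atTop 1] with n hn
      simp only [Pi.div_apply]
      rw [hprod n hn]
      have hX : (Rn n / (n:ℝ)) ^ (2 * ρ2) ≠ 0 := by
        have hn0 : (0:ℝ) < (n:ℝ) := by exact_mod_cast hn
        exact ne_of_gt (Real.rpow_pos_of_pos (div_pos (hRn_pos n) hn0) _)
      have hne : (F * F) * (Rn n / (n:ℝ)) ^ (2 * ρ2) ≠ 0 :=
        mul_ne_zero (by positivity) hX
      rw [show (F * F) * ((Rn n / (n:ℝ)) ^ (2 * ρ2) * (n:ℝ) ^ e)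
          = ((F * F) * (Rn n / (n:ℝ)) ^ (2 * ρ2)) * (n:ℝ) ^ e by ring,
        mul_div_cancel_left₀ _ hne]
    have he0 : e = 0 :=
      rpow_exponent_zero (ne_of_gt (by positivity : (0:ℝ) < (B * B) / (F * F))) hZ
    have hre : r.re = (n0 : ℝ) + 2 := by
      have h1 : ρ2 = 2 - r.re := by
        rw [hρ2def]
        simp
      rw [hedef, h1] at he0
      push_cast at he0
      linarith
    have hrval : r = ((n0 + 2 : ℤ) : ℂ) := by
      apply Complex.ext
      · simp only [Complex.intCast_re]
        rw [hre]
        push_cast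
        ring
      · rw [hmu]
        simp
    have hr2c : r - 2 = ((n0 : ℤ) : ℂ) := by
      rw [hrval]
      push_cast
      ring
    -- the complex limit of lam^n * f x
    have hlimx : ∀ x : ℝ, Tendsto (fun n : ℕ => lam ^ n * f ((x:ℝ):ℂ)) atTop
        (𝓝 ((-1:ℂ) ^ n0 * b n0)) := by
      intro x
      have habs : Tendsto (fun n : ℕ => |x + (n:ℝ)|) atTop atTop :=
        tendsto_abs_atTop_atTop.comp
          (tendsto_atTop_add_const_left _ x tendsto_natCast_atTop_atTop)
      have hTp := tend_aux hM1 hC' (y := fun n => x + (n:ℝ)) habs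
      have hpos : ∀ᶠ n : ℕ in atTop, 0 < x + (n:ℝ) :=
        (tendsto_atTop_add_const_left _ x
          (tendsto_natCast_atTop_atTop : Tendsto (fun n : ℕ => (n:ℝ)) atTop atTop)).eventually_gt_atTop 0
      have hinv : Tendsto (fun n : ℕ => (Complex.ofReal (x + (n:ℝ)))⁻¹) atTop (𝓝 0) := by
        rw [tendsto_zero_iff_norm_tendsto_zero]
        have h1 : Tendsto (fun n : ℕ => |x + (n:ℝ)|⁻¹) atTop (𝓝 0) :=
          tendsto_inv_atTop_zero.comp habs
        apply h1.congr
        intro n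
        rw [norm_inv, Complex.norm_real, Real.norm_eq_abs]
      have hbase : Tendsto (fun n : ℕ =>
          (Complex.I - Complex.ofReal (x + (n:ℝ))) / Complex.ofReal (x + (n:ℝ)))
          atTop (𝓝 (-1)) := by
        have h1 : Tendsto (fun n : ℕ =>
            Complex.I * (Complex.ofReal (x + (n:ℝ)))⁻¹ - 1) atTop (𝓝 (Complex.I * 0 - 1)) :=
          (hinv.const_mul Complex.I).sub_const 1
        simp only [mul_zero, zero_sub] at h1
        apply h1.congr'
        filter_upwards [hpos] with n hn
        have hy : Complex.ofReal (x + (n:ℝ)) ≠ 0 := Complex.ofReal_ne_zero.mpr (ne_of_gt hn)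
        rw [sub_div, div_self hy, div_eq_mul_inv]
      have hzp := hbase.zpow₀ n0 (Or.inl (by norm_num : (-1:ℂ) ≠ 0))
      have hmul := hzp.mul hTp
      apply hmul.congr'
      filter_upwards [hpos] with n hn
      have hy : Complex.ofReal (x + (n:ℝ)) ≠ 0 := Complex.ofReal_ne_zero.mpr (ne_of_gt hn)
      have hzz : (Complex.ofReal (x + (n:ℝ))) ^ n0 ≠ 0 := zpow_ne_zero n0 hy
      have step1 : ((Complex.I - Complex.ofReal (x + (n:ℝ))) / Complex.ofReal (x + (n:ℝ))) ^ n0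
            * ((Complex.ofReal (x + (n:ℝ))) ^ n0 * g (x + (n:ℝ)))
          = (Complex.I - Complex.ofReal (x + (n:ℝ))) ^ n0 * g (x + (n:ℝ)) := by
        rw [div_zpow, div_mul_eq_mul_div,
          show (Complex.I - Complex.ofReal (x + (n:ℝ))) ^ n0
              * ((Complex.ofReal (x + (n:ℝ))) ^ n0 * g (x + (n:ℝ)))
            = ((Complex.I - Complex.ofReal (x + (n:ℝ))) ^ n0 * g (x + (n:ℝ)))
              * (Complex.ofReal (x + (n:ℝ))) ^ n0 by ring]
        exact mul_div_cancel_right₀ _ hzz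
      rw [step1]
      have step2 : (Complex.I - Complex.ofReal (x + (n:ℝ))) ^ n0
          = (Complex.I - Complex.ofReal (x + (n:ℝ))) ^ (r - 2) := by
        rw [hr2c, Complex.cpow_intCast]
      rw [step2, ← hfg (x + (n:ℝ))]
      have step3 : ((x + (n:ℝ) : ℝ) : ℂ) = (x:ℂ) + (n:ℕ) := by push_cast; ring
      rw [step3, hpn n x]
    -- lam = 1
    have hcne : ((-1:ℂ) ^ n0 * b n0) ≠ 0 :=
      mul_ne_zero (zpow_ne_zero n0 (by norm_num)) hb0
    have hlamlim : Tendsto (fun n : ℕ => lam ^ n) atTop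
        (𝓝 (((-1:ℂ) ^ n0 * b n0) * (f ((0:ℝ):ℂ))⁻¹)) := by
      have h1 := (hlimx 0).mul_const (f ((0:ℝ):ℂ))⁻¹
      apply h1.congr
      intro n
      rw [mul_assoc, mul_inv_cancel₀ hf0, mul_one]
    have hlam1 : lam = 1 :=
      geom_tendsto_one (mul_ne_zero hcne (inv_ne_zero hf0)) hlamlim
    have hreal : ∀ x : ℝ, f ((x:ℝ):ℂ) = (-1:ℂ) ^ n0 * b n0 := by
      intro x
      have h1 := hlimx x
      rw [hlam1] at h1
      simp only [one_pow, one_mul] at h1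
      exact tendsto_nhds_unique tendsto_const_nhds h1
    have hconst := const_of_real hU hUsub hf hreal
    constructor
    · intro _
      exact ⟨_, hconst⟩
    · intro hcon
      exact (hcon ⟨hlam1, n0 + 2, by omega, hrval⟩).elim
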